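/- Suppose C is submodular and each valuation v_i is supermodular (or that n = 2 and valuations are arbitrary monotone functions). Let ALG maximize Σ_j v_j(S_j) − P_C(S) and for each i let ALG^{−i} maximize the same objective subject to player i getting ∅. Then Σ_{i=1}^n [ Σ_j v_j(ALG^{−i}_j) − P_C(ALG^{−i}) ] ≤ (n−1)·[ Σ_j v_j(ALG_j) − P_C(ALG) ]. -/

import Mathlib

open Finset

variable {α : Type*}

noncomputable def potential [DecidableEq α] (n : ℕ)
    (C : Finset α → ℝ) (S : Fin n → Finset α) : ℝ :=
  ∑ I ∈ (univ : Finset (Fin n)).powerset.filter (· ≠ ∅),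
    C (I.biUnion S) / ((I.card : ℝ) * (n.choose I.card : ℝ))



lemma pot_bot [DecidableEq α] {n : ℕ} (C : Finset α → ℝ) (hC0 : C ∅ = 0) :
    potential n C (fun _ => (∅ : Finset α)) = 0 := by
  unfold potential
  refine sum_eq_zero fun I _ => ?_
  have h : I.biUnion (fun _ => (∅ : Finset α)) = ∅ := by ext x; simp
  rw [h, hC0, zero_div]

lemma pot_submod [DecidableEq α] {n : ℕ} (C : Finset α → ℝ)
    (hCmono : ∀ S T : Finset α, S ⊆ T → C S ≤ C T)
    (hCsub : ∀ S T : Finset α, C (S ∪ T) + C (S ∩ T) ≤ C S + C T)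
    (X Y : Fin n → Finset α) :
    potential n C (X ⊔ Y) + potential n C (X ⊓ Y)
      ≤ potential n C X + potential n C Y := by
  unfold potential
  rw [← sum_add_distrib, ← sum_add_distrib]
  refine sum_le_sum fun I hI => ?_
  simp only [mem_filter, mem_powerset] at hI
  have hd : (0:ℝ) < (I.card : ℝ) * (n.choose I.card : ℝ) := by
    have h1 : 0 < I.card := card_pos.2 (nonempty_iff_ne_empty.2 hI.2)
    have h2 : 0 < n.choose I.card :=
      Nat.choose_pos (by simpa using card_le_card hI.1)
    positivity
  rw [← add_div, ← add_div]
  apply div_le_div_of_nonneg_right _ hd.le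
  have h1 : I.biUnion (X ⊔ Y) = I.biUnion X ∪ I.biUnion Y := by
    ext x
    simp only [mem_biUnion, mem_union, Pi.sup_apply, sup_eq_union]
    constructor
    · rintro ⟨i, hi, h | h⟩
      · exact Or.inl ⟨i, hi, h⟩
      · exact Or.inr ⟨i, hi, h⟩
    · rintro (⟨i, hi, h⟩ | ⟨i, hi, h⟩)
      · exact ⟨i, hi, Or.inl h⟩
      · exact ⟨i, hi, Or.inr h⟩
  have h2 : I.biUnion (X ⊓ Y) ⊆ I.biUnion X ∩ I.biUnion Y := by
    intro x hx
    simp only [mem_biUnion, Pi.inf_apply, inf_eq_inter, mem_inter] at hx ⊢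
    obtain ⟨i, hi, h⟩ := hx
    exact ⟨⟨i, hi, h.1⟩, ⟨i, hi, h.2⟩⟩
  calc C (I.biUnion (X ⊔ Y)) + C (I.biUnion (X ⊓ Y))
      ≤ C (I.biUnion X ∪ I.biUnion Y) + C (I.biUnion X ∩ I.biUnion Y) := by
        rw [h1]
        exact add_le_add_right (hCmono _ _ h2) _
    _ ≤ C (I.biUnion X) + C (I.biUnion Y) := hCsub _ _

lemma foldr_inf_le {β : Type*} [SemilatticeInf β] (Top : β) :
    ∀ (l : List β), ∀ x ∈ l, l.foldr (· ⊓ ·) Top ≤ x := by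
  intro l
  induction l with
  | nil => simp
  | cons a l ih =>
    intro x hx
    rcases List.mem_cons.1 hx with h | h
    · subst h; exact inf_le_left
    · exact le_trans inf_le_right (ih x h)

lemma chain_sum {β : Type*} [Lattice β] [OrderBot β]
    (Feas : β → Prop) (F : β → ℝ) (Top : β)
    (hFeasTop : Feas Top) (hFeasBot : Feas (⊥ : β))
    (hFeasSup : ∀ X Y, Feas X → Feas Y → Feas (X ⊔ Y))
    (hFeasInf : ∀ X Y, Feas X → Feas Y → Feas (X ⊓ Y))
    (hFbot : F ⊥ = 0)
    (hsup : ∀ X Y, Feas X → Feas Y → F X + F Y ≤ F (X ⊔ Y) + F (X ⊓ Y))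
    (hle : ∀ X, Feas X → X ≤ Top) :
    ∀ l : List β, (∀ S ∈ l, Feas S) →
      ∃ c : ℕ → β, c 0 = Top ∧ (∀ k, c (k+1) ≤ c k) ∧ (∀ k, Feas (c k)) ∧
        (∀ k, l.length < k → c k = ⊥) ∧ c l.length = l.foldr (· ⊓ ·) Top ∧
        (l.map F).sum ≤ ∑ k ∈ range l.length, F (c (k+1)) := by
  intro l
  induction l with
  | nil =>
    intro _
    refine ⟨fun k => if k = 0 then Top else ⊥, by simp, ?_, ?_, ?_, by simp, by simp⟩
    · intro k; simp
    · intro k; dsimp only; split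
      · exact hFeasTop
      · exact hFeasBot
    · intro k hk
      simp [Nat.pos_iff_ne_zero.1 hk]
  | cons S l ih =>
    intro hfeas
    obtain ⟨c, hc0, hadj, hcf, hcbot, hcinf, hcsum⟩ :=
      ih (fun x hx => hfeas x (List.mem_cons_of_mem _ hx))
    have hSfeas : Feas S := hfeas S List.mem_cons_self
    have hcmbot : c (l.length + 1) = ⊥ := hcbot _ (Nat.lt_succ_self _)
    refine ⟨fun k => if k = 0 then Top else c k ⊔ (c (k-1) ⊓ S), by simp, ?_, ?_, ?_, ?_, ?_⟩
    · intro k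
      match k with
      | 0 =>
        simp only [Nat.zero_add, if_neg (Nat.one_ne_zero), if_pos rfl]
        exact sup_le (hle _ (hcf 1)) (le_trans inf_le_left (hle _ (hcf 0)))
      | (j+1) =>
        simp only [if_neg (Nat.succ_ne_zero _), Nat.add_sub_cancel]
        exact sup_le_sup (hadj _) (inf_le_inf_right _ (hadj _))
    · intro k
      dsimp only; split
      · exact hFeasTop
      · exact hFeasSup _ _ (hcf k) (hFeasInf _ _ (hcf _) hSfeas)
    · intro k hk
      simp only [List.length_cons] at hk
      have hk0 : k ≠ 0 := by omega
      have h1 : c k = ⊥ := hcbot k (by omega)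
      have h2 : c (k-1) = ⊥ := hcbot (k-1) (by omega)
      simp [hk0, h1, h2]
    · simp only [List.length_cons, if_neg (Nat.succ_ne_zero _), Nat.add_sub_cancel,
        hcmbot, bot_sup_eq, hcinf, List.foldr_cons]
      rw [inf_comm]
    · simp only [List.length_cons, List.map_cons, List.sum_cons]
      set g : ℕ → ℝ := fun k => F (c k ⊓ S) with hg
      have hstep : ∀ k, F (c (k+1)) - F ((fun k => if k = 0 then Top
          else c k ⊔ (c (k-1) ⊓ S)) (k+1)) ≤ g (k+1) - g k := by
        intro k
        have h := hsup (c (k+1)) (c k ⊓ S) (hcf _) (hFeasInf _ _ (hcf _) hSfeas)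
        have hinf : c (k+1) ⊓ (c k ⊓ S) = c (k+1) ⊓ S := by
          rw [← inf_assoc, inf_eq_left.2 (hadj k)]
        rw [hinf] at h
        simp only [if_neg (Nat.succ_ne_zero _), Nat.add_sub_cancel, hg]
        linarith
      have htel : ∑ k ∈ range (l.length + 1), (g (k+1) - g k) = g (l.length + 1) - g 0 :=
        Finset.sum_range_sub g (l.length + 1)
      have hg0 : g 0 = F S := by
        simp only [hg, hc0, inf_eq_right.2 (hle S hSfeas)]
      have hgend : g (l.length + 1) = 0 := by
        simp only [hg, hcmbot, bot_inf_eq, hFbot]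
      have hsum1 : ∑ k ∈ range (l.length + 1),
          (F (c (k+1)) - F ((fun k => if k = 0 then Top else c k ⊔ (c (k-1) ⊓ S)) (k+1)))
          ≤ ∑ k ∈ range (l.length + 1), (g (k+1) - g k) :=
        sum_le_sum fun k _ => hstep k
      rw [htel, hgend, hg0, sum_sub_distrib] at hsum1
      have hlast : ∑ k ∈ range (l.length + 1), F (c (k+1))
          = ∑ k ∈ range l.length, F (c (k+1)) + F (c (l.length + 1)) :=
        sum_range_succ _ _
      rw [hlast, hcmbot, hFbot] at hsum1
      linarith

theorem stmt13 [DecidableEq α] (n : ℕ) (M : Fin n → Finset α)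
    (hM : ∀ i j : Fin n, i ≠ j → Disjoint (M i) (M j))
    (C : Finset α → ℝ) (hC0 : C ∅ = 0) (hCnn : ∀ S, 0 ≤ C S)
    (hCmono : ∀ S T : Finset α, S ⊆ T → C S ≤ C T)
    (hCsub : ∀ S T : Finset α, C (S ∪ T) + C (S ∩ T) ≤ C S + C T)
    (v : Fin n → Finset α → ℝ) (hv0 : ∀ i, v i ∅ = 0)
    (hvmono : ∀ i, ∀ S T : Finset α, S ⊆ T → T ⊆ M i → v i S ≤ v i T)
    (hcase : (∀ i, ∀ S T : Finset α, S ⊆ M i → T ⊆ M i →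
        v i S + v i T ≤ v i (S ∪ T) + v i (S ∩ T)) ∨ n = 2)
    (ALG : Fin n → Finset α) (hALGsub : ∀ i, ALG i ⊆ M i)
    (hALGmax : ∀ S : Fin n → Finset α, (∀ i, S i ⊆ M i) →
      ∑ j, v j (S j) - potential n C S ≤ ∑ j, v j (ALG j) - potential n C ALG)
    (A : Fin n → Fin n → Finset α) (hAsub : ∀ i j, A i j ⊆ M j)
    (hAii : ∀ i, A i i = ∅)
    (hAmax : ∀ i, ∀ S : Fin n → Finset α, (∀ j, S j ⊆ M j) → S i = ∅ →
      ∑ j, v j (S j) - potential n C S ≤ ∑ j, v j (A i j) - potential n C (A i)) :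
    ∑ i, (∑ j, v j (A i j) - potential n C (A i)) ≤
      ((n : ℝ) - 1) * (∑ j, v j (ALG j) - potential n C ALG) := by
  have hbotfun : (⊥ : Fin n → Finset α) = fun _ => ∅ := funext fun _ => rfl
  set F : (Fin n → Finset α) → ℝ :=
    fun S => ∑ j, v j (S j) - potential n C S with hF
  have hFbot : F (⊥ : Fin n → Finset α) = 0 := by
    rw [hF]
    simp only [hbotfun, hv0, sum_const_zero, pot_bot C hC0, sub_zero]
  rcases hcase with hsupv | hn2
  · -- supermodular case
    rcases Nat.eq_zero_or_pos n with rfl | hn1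
    · have hpot : ∀ S : Fin 0 → Finset α, potential 0 C S = 0 := by
        intro S
        unfold potential
        apply sum_eq_zero
        intro I hI
        simp only [mem_filter, mem_powerset] at hI
        exact absurd (Finset.eq_empty_of_isEmpty I) hI.2
      simp [hpot]
    · have hFsup : ∀ X Y : Fin n → Finset α, (∀ j, X j ⊆ M j) → (∀ j, Y j ⊆ M j) →
          F X + F Y ≤ F (X ⊔ Y) + F (X ⊓ Y) := by
        intro X Y hX hY
        have hv : ∑ j, v j (X j) + ∑ j, v j (Y j)
            ≤ ∑ j, v j ((X ⊔ Y) j) + ∑ j, v j ((X ⊓ Y) j) := by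
          rw [← sum_add_distrib, ← sum_add_distrib]
          refine sum_le_sum fun j _ => ?_
          simpa [Pi.sup_apply, Pi.inf_apply, sup_eq_union, inf_eq_inter] using
            hsupv j (X j) (Y j) (hX j) (hY j)
        have hp := pot_submod C hCmono hCsub X Y
        simp only [hF]
        linarith
      obtain ⟨c, hc0, hadj, hcf, hcbot, hcinf, hcsum⟩ :=
        chain_sum (fun S => ∀ j, S j ⊆ M j) F M
          (fun j => Subset.rfl)
          (fun j => by rw [hbotfun]; exact empty_subset _)
          (fun X Y hX hY j => by
            simp only [Pi.sup_apply, sup_eq_union]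
            exact union_subset (hX j) (hY j))
          (fun X Y hX hY j => by
            simp only [Pi.inf_apply, inf_eq_inter]
            exact inter_subset_left.trans (hX j))
          hFbot hFsup
          (fun X hX => Pi.le_def.mpr fun j => le_iff_subset.mpr (hX j))
          (List.ofFn A)
          (fun x hx => by
            obtain ⟨i, rfl⟩ := List.mem_ofFn.1 hx
            exact hAsub i)
      simp only [List.length_ofFn] at hcbot hcinf hcsum
      have hcn : c n = ⊥ := by
        have hbound : ∀ j : Fin n, c n ≤ A j := by
          intro j
          rw [hcinf]
          exact foldr_inf_le M (List.ofFn A) (A j) (List.mem_ofFn.2 ⟨j, rfl⟩)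
        apply le_bot_iff.1
        refine Pi.le_def.mpr fun j => ?_
        have h := Pi.le_def.1 (hbound j) j
        rw [hAii j] at h
        simpa using h
      have hmap : ((List.ofFn A).map F).sum = ∑ i, F (A i) := by
        rw [List.map_ofFn, List.sum_ofFn]
        rfl
      obtain ⟨m, rfl⟩ : ∃ m, n = m + 1 := ⟨n - 1, (Nat.succ_pred_eq_of_pos hn1).symm⟩
      have hsplit : ∑ k ∈ range (m + 1), F (c (k+1))
          = ∑ k ∈ range m, F (c (k+1)) + F (c (m+1)) := sum_range_succ _ _
      rw [hcn, hFbot, add_zero] at hsplit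
      have hterm : ∀ k ∈ range m, F (c (k+1)) ≤ F ALG :=
        fun k _ => hALGmax (c (k+1)) (hcf (k+1))
      have hbound2 : ∑ k ∈ range m, F (c (k+1)) ≤ (m : ℝ) * F ALG := by
        calc ∑ k ∈ range m, F (c (k+1)) ≤ ∑ k ∈ range m, F ALG := sum_le_sum hterm
          _ = (m : ℝ) * F ALG := by rw [sum_const, card_range, nsmul_eq_mul]
      have hfinal : ∑ i, F (A i) ≤ (m : ℝ) * F ALG := by
        rw [← hmap]
        calc ((List.ofFn A).map F).sum ≤ ∑ k ∈ range (m+1), F (c (k+1)) := hcsum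
          _ = ∑ k ∈ range m, F (c (k+1)) := hsplit
          _ ≤ (m : ℝ) * F ALG := hbound2
      have hcast : ((m + 1 : ℕ) : ℝ) - 1 = (m : ℝ) := by push_cast; ring
      rw [hcast]
      exact hfinal
  · -- n = 2 case
    subst hn2
    have hinf : A 0 ⊓ A 1 = (fun _ => (∅ : Finset α)) := by
      funext j
      fin_cases j
      · simp [Pi.inf_apply, inf_eq_inter, hAii 0]
      · simp [Pi.inf_apply, inf_eq_inter, hAii 1]
    have hp := pot_submod C hCmono hCsub (A 0) (A 1)
    rw [hinf, pot_bot C hC0, add_zero] at hp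
    have hUfeas : ∀ j, (A 0 ⊔ A 1) j ⊆ M j := fun j => by
      simp only [Pi.sup_apply, sup_eq_union]
      exact union_subset (hAsub 0 j) (hAsub 1 j)
    have hmax := hALGmax (A 0 ⊔ A 1) hUfeas
    have hvU : ∑ j, v j ((A 0 ⊔ A 1) j) = ∑ j, v j (A 0 j) + ∑ j, v j (A 1 j) := by
      rw [Fin.sum_univ_two, Fin.sum_univ_two, Fin.sum_univ_two]
      simp only [Pi.sup_apply, sup_eq_union, hAii 0, hAii 1, empty_union,
        union_empty, hv0]
      ring
    rw [hvU] at hmax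
    rw [Fin.sum_univ_two]
    have : ((2 : ℕ) : ℝ) - 1 = 1 := by norm_num
    rw [this, one_mul]
    linarith
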